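/- Let W ⊂ U and Z ⊂ V be finite-dimensional subspaces and δ ∈ (0,1). Then Z is δ-proximal for W if and only if inf_{w∈W, w≠0} sup_{v∈Z, v≠0} b(w,v)/(‖w‖_{Û} ‖v‖_V) ≥ √(1 − δ²). -/

import Mathlib

open Metric InnerProductSpace RealInnerProductSpace

section aux
variable {V : Type*} [NormedAddCommGroup V] [InnerProductSpace ℝ V]

lemma pyth (Z : Submodule ℝ V) [Z.HasOrthogonalProjection] (r : V) :
    ‖r‖ ^ 2 = ‖(Submodule.orthogonalProjectionOnto Z r : V)‖ ^ 2 + ‖r - (Submodule.orthogonalProjectionOnto Z r : V)‖ ^ 2 := by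
  have h0 : ⟪(Submodule.orthogonalProjectionOnto Z r : V), r - (Submodule.orthogonalProjectionOnto Z r : V)⟫ = 0 := by
    rw [real_inner_comm]
    exact Z.starProjection_inner_eq_zero r _ (Submodule.orthogonalProjectionOnto Z r).2
  have := norm_add_sq_eq_norm_sq_add_norm_sq_of_inner_eq_zero _ _ h0
  simp only [add_sub_cancel] at this
  linarith [this]

lemma sup_eq (Z : Submodule ℝ V) [Z.HasOrthogonalProjection]
    [Nonempty {v : V // v ∈ Z ∧ v ≠ 0}] (r : V) (hr : r ≠ 0) :
    (⨆ v : {v : V // v ∈ Z ∧ v ≠ 0}, ⟪r, v.1⟫ / (‖r‖ * ‖v.1‖)) =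
      ‖(Submodule.orthogonalProjectionOnto Z r : V)‖ / ‖r‖ := by
  have hrn : 0 < ‖r‖ := norm_pos_iff.mpr hr
  set p : V := (Submodule.orthogonalProjectionOnto Z r : V) with hp
  have hinner : ∀ v ∈ Z, ⟪r, v⟫ = ⟪p, v⟫ := by
    intro v hv
    have : ⟪r - (Submodule.orthogonalProjectionOnto Z r : V), v⟫ = 0 := Z.starProjection_inner_eq_zero r v hv
    rw [inner_sub_left] at this
    linarith [this]
  have hub : ∀ v : {v : V // v ∈ Z ∧ v ≠ 0}, ⟪r, v.1⟫ / (‖r‖ * ‖v.1‖) ≤ ‖p‖ / ‖r‖ := by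
    rintro ⟨v, hv, hv0⟩
    have hvn : 0 < ‖v‖ := norm_pos_iff.mpr hv0
    rw [hinner v hv]
    have hcs : ⟪p, v⟫ ≤ ‖p‖ * ‖v‖ := real_inner_le_norm p v
    rw [div_le_div_iff₀ (by positivity) hrn]
    calc ⟪p, v⟫ * ‖r‖ ≤ ‖p‖ * ‖v‖ * ‖r‖ := by nlinarith
      _ = ‖p‖ * (‖r‖ * ‖v‖) := by ring
  have hbdd : BddAbove (Set.range fun v : {v : V // v ∈ Z ∧ v ≠ 0} =>
      ⟪r, v.1⟫ / (‖r‖ * ‖v.1‖)) := ⟨‖p‖ / ‖r‖, by rintro x ⟨v, rfl⟩; exact hub v⟩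
  apply le_antisymm (ciSup_le hub)
  by_cases hp0 : p = 0
  · rw [hp0]
    simp only [norm_zero, zero_div]
    obtain ⟨v⟩ := (inferInstance : Nonempty {v : V // v ∈ Z ∧ v ≠ 0})
    have : (0:ℝ) ≤ ⟪r, v.1⟫ / (‖r‖ * ‖v.1‖) := by
      rw [hinner v.1 v.2.1, hp0]; simp
    exact this.trans (le_ciSup hbdd v)
  · have hpZ : p ∈ Z := (Submodule.orthogonalProjectionOnto Z r).2
    have := le_ciSup hbdd ⟨p, hpZ, hp0⟩
    have hval : ⟪r, p⟫ / (‖r‖ * ‖p‖) = ‖p‖ / ‖r‖ := by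
      rw [hinner p hpZ, real_inner_self_eq_norm_sq]
      have hpn : 0 < ‖p‖ := norm_pos_iff.mpr hp0
      field_simp
    rwa [hval] at this

end aux

theorem delta_proximal_iff_infsup
    {U V : Type*} [NormedAddCommGroup U] [InnerProductSpace ℝ U] [CompleteSpace U]
    [NormedAddCommGroup V] [InnerProductSpace ℝ V] [CompleteSpace V]
    (B : U ≃L[ℝ] (V →L[ℝ] ℝ))
    (W : Submodule ℝ U) [FiniteDimensional ℝ W] (hW : W ≠ ⊥)
    (Z : Submodule ℝ V) [FiniteDimensional ℝ Z]
    (δ : ℝ) (hδ0 : 0 < δ) (hδ1 : δ < 1) :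
    (∀ w ∈ W,
      ‖(toDual ℝ V).symm (B w) - (Submodule.orthogonalProjectionOnto Z ((toDual ℝ V).symm (B w)) : V)‖ ≤
        δ * ‖(toDual ℝ V).symm (B w)‖) ↔
      Real.sqrt (1 - δ ^ 2) ≤
        ⨅ w : {w : U // w ∈ W ∧ w ≠ 0}, ⨆ v : {v : V // v ∈ Z ∧ v ≠ 0},
          (B w.1) v.1 / (‖B w.1‖ * ‖v.1‖) := by
  -- setup
  obtain ⟨w₀, hw₀W, hw₀⟩ := Submodule.exists_mem_ne_zero_of_ne_bot hW
  have hWne : Nonempty {w : U // w ∈ W ∧ w ≠ 0} := ⟨⟨w₀, hw₀W, hw₀⟩⟩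
  set r : U → V := fun w => (toDual ℝ V).symm (B w) with hrdef
  have hrnorm : ∀ w, ‖r w‖ = ‖B w‖ := fun w => LinearIsometryEquiv.norm_map _ _
  have hrne : ∀ w : U, w ≠ 0 → r w ≠ 0 := fun w hw h =>
    hw (B.map_eq_zero_iff.mp ((toDual ℝ V).symm.map_eq_zero_iff.mp h))
  have happ : ∀ w v, (B w) v = ⟪r w, v⟫ := fun w v => (toDual_symm_apply).symm
  have hsqrtpos : 0 < Real.sqrt (1 - δ ^ 2) := Real.sqrt_pos.mpr (by nlinarith)
  by_cases hZ : Z = ⊥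
  · -- both sides false
    constructor
    · intro h
      exfalso
      have := h w₀ hw₀W
      have hr0 : r w₀ ≠ 0 := hrne w₀ hw₀
      subst hZ
      have : ‖r w₀ - (Submodule.orthogonalProjectionOnto (⊥ : Submodule ℝ V) (r w₀) : V)‖ ≤ δ * ‖r w₀‖ := this
      simp only [Submodule.orthogonalProjectionOnto_bot, ContinuousLinearMap.zero_apply,
        ZeroMemClass.coe_zero, sub_zero] at this
      have := norm_pos_iff.mpr hr0
      nlinarith
    · intro h
      exfalso
      have hE : IsEmpty {v : V // v ∈ Z ∧ v ≠ 0} := by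
        constructor; rintro ⟨v, hv, hv0⟩
        exact hv0 (by simpa [hZ] using hv)
      have hsup : ∀ w : {w : U // w ∈ W ∧ w ≠ 0},
          (⨆ v : {v : V // v ∈ Z ∧ v ≠ 0}, (B w.1) v.1 / (‖B w.1‖ * ‖v.1‖)) = 0 := by
        intro w; exact Real.iSup_of_isEmpty _
      rw [iInf_congr hsup, ciInf_const] at h
      linarith
  · obtain ⟨v₀, hv₀Z, hv₀⟩ := Submodule.exists_mem_ne_zero_of_ne_bot hZ
    have hZne : Nonempty {v : V // v ∈ Z ∧ v ≠ 0} := ⟨⟨v₀, hv₀Z, hv₀⟩⟩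
    -- rewrite each sup
    have hsup : ∀ w : {w : U // w ∈ W ∧ w ≠ 0},
        (⨆ v : {v : V // v ∈ Z ∧ v ≠ 0}, (B w.1) v.1 / (‖B w.1‖ * ‖v.1‖)) =
          ‖(Submodule.orthogonalProjectionOnto Z (r w.1) : V)‖ / ‖r w.1‖ := by
      rintro ⟨w, hwW, hw0⟩
      have : (fun v : {v : V // v ∈ Z ∧ v ≠ 0} => (B w) v.1 / (‖B w‖ * ‖v.1‖)) =
          fun v : {v : V // v ∈ Z ∧ v ≠ 0} => ⟪r w, v.1⟫ / (‖r w‖ * ‖v.1‖) := by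
        funext v; rw [happ, hrnorm]
      rw [this]
      exact sup_eq Z (r w) (hrne w hw0)
    -- key per-w equivalence
    have hkey : ∀ w : U, w ≠ 0 →
        (‖r w - (Submodule.orthogonalProjectionOnto Z (r w) : V)‖ ≤ δ * ‖r w‖ ↔
          Real.sqrt (1 - δ ^ 2) ≤ ‖(Submodule.orthogonalProjectionOnto Z (r w) : V)‖ / ‖r w‖) := by
      intro w hw0
      have hr0 : r w ≠ 0 := hrne w hw0
      have hrn : 0 < ‖r w‖ := norm_pos_iff.mpr hr0
      set p : V := (Submodule.orthogonalProjectionOnto Z (r w) : V)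
      have hpyth := pyth Z (r w)
      have hδ2 : Real.sqrt (1 - δ ^ 2) ^ 2 = 1 - δ ^ 2 :=
        Real.sq_sqrt (by nlinarith)
      constructor
      · intro h
        rw [le_div_iff₀ hrn]
        have h1 : ‖r w - p‖ ^ 2 ≤ δ ^ 2 * ‖r w‖ ^ 2 := by nlinarith [norm_nonneg (r w - p)]
        have h2 : (Real.sqrt (1 - δ ^ 2) * ‖r w‖) ^ 2 ≤ ‖p‖ ^ 2 := by
          rw [mul_pow, hδ2]; nlinarith
        nlinarith [norm_nonneg p, Real.sqrt_nonneg (1 - δ^2), hrn]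
      · intro h
        rw [le_div_iff₀ hrn] at h
        have h2 : (1 - δ ^ 2) * ‖r w‖ ^ 2 ≤ ‖p‖ ^ 2 := by
          have := mul_self_le_mul_self (by positivity : (0:ℝ) ≤ Real.sqrt (1 - δ ^ 2) * ‖r w‖) h
          nlinarith [hδ2]
        have h3 : ‖r w - p‖ ^ 2 ≤ (δ * ‖r w‖) ^ 2 := by nlinarith
        have h4 := Real.sqrt_le_sqrt h3
        rwa [Real.sqrt_sq (norm_nonneg _), Real.sqrt_sq (by positivity)] at h4
    have hbdd : BddBelow (Set.range fun w : {w : U // w ∈ W ∧ w ≠ 0} =>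
        ⨆ v : {v : V // v ∈ Z ∧ v ≠ 0}, (B w.1) v.1 / (‖B w.1‖ * ‖v.1‖)) := by
      refine ⟨0, ?_⟩
      rintro x ⟨w, rfl⟩
      simp only [hsup w]
      positivity
    constructor
    · intro h
      apply le_ciInf
      intro w
      rw [hsup w]
      exact (hkey w.1 w.2.2).mp (h w.1 w.2.1)
    · intro h w hwW
      by_cases hw0 : w = 0
      · subst hw0
        simp [hrdef]
      · refine (hkey w hw0).mpr ?_
        have := h.trans (ciInf_le hbdd ⟨w, hwW, hw0⟩)
        rwa [hsup ⟨w, hwW, hw0⟩] at this
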